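/- Let G be a split graph with vertex set partitioned into a clique K and an independent set I. For a vertex w ∈ K, let S_w denote the set of neighbors of w lying in I. Then G contains an induced subgraph isomorphic to P_4 if and only if there exist distinct vertices u, v ∈ K such that both set differences S_u \ S_v and S_v \ S_u are nonempty. -/

import Mathlib

open SimpleGraph

/-- **Correctness criterion of the unswitchable-graph recognition algorithm.**
Let `G` be a split graph with vertex set partitioned into a clique `K` and an
independent set `I`, and for `w ∈ K` let `S_w = {z ∈ I | G.Adj w z}` be the set of
neighbors of `w` lying in `I`.  Then `G` has an induced subgraph isomorphic to `P₄`
iff there are distinct `u, v ∈ K` with both `S_u \ S_v` and `S_v \ S_u` nonempty.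
(Graph embeddings `↪g` are exactly induced-subgraph embeddings.) -/
theorem induced_P4_iff_clique_pair {V : Type*} [Fintype V] (G : SimpleGraph V)
    (K I : Set V) (hcover : K ∪ I = Set.univ) (hdisj : Disjoint K I)
    (hK : G.IsClique K) (hI : ∀ a ∈ I, ∀ b ∈ I, ¬ G.Adj a b) :
    Nonempty (SimpleGraph.pathGraph 4 ↪g G) ↔
      ∃ u ∈ K, ∃ v ∈ K, u ≠ v ∧
        ({z ∈ I | G.Adj u z} \ {z ∈ I | G.Adj v z}).Nonempty ∧
        ({z ∈ I | G.Adj v z} \ {z ∈ I | G.Adj u z}).Nonempty := by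
  have cover : ∀ x : V, x ∈ K ∨ x ∈ I := by
    intro x
    have hx : x ∈ K ∪ I := by rw [hcover]; trivial
    exact hx
  constructor
  · rintro ⟨f⟩
    have hadj : ∀ i j : Fin 4, G.Adj (f i) (f j) ↔ (pathGraph 4).Adj i j :=
      fun i j => f.map_adj_iff
    have h01 : G.Adj (f 0) (f 1) := (hadj 0 1).2 (by rw [pathGraph_adj]; decide)
    have h12 : G.Adj (f 1) (f 2) := (hadj 1 2).2 (by rw [pathGraph_adj]; decide)
    have h23 : G.Adj (f 2) (f 3) := (hadj 2 3).2 (by rw [pathGraph_adj]; decide)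
    have h02 : ¬ G.Adj (f 0) (f 2) := fun h => by
      have := (pathGraph_adj.mp ((hadj 0 2).1 h)); revert this; decide
    have h03 : ¬ G.Adj (f 0) (f 3) := fun h => by
      have := (pathGraph_adj.mp ((hadj 0 3).1 h)); revert this; decide
    have h13 : ¬ G.Adj (f 1) (f 3) := fun h => by
      have := (pathGraph_adj.mp ((hadj 1 3).1 h)); revert this; decide
    have h0I : f 0 ∈ I := by
      rcases cover (f 0) with h0K | h0I
      · rcases cover (f 2) with h2K | h2I
        · exact absurd (hK h0K h2K (f.injective.ne (by decide))) h02
        · rcases cover (f 3) with h3K | h3I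
          · exact absurd (hK h0K h3K (f.injective.ne (by decide))) h03
          · exact absurd h23 (hI _ h2I _ h3I)
      · exact h0I
    have h3I : f 3 ∈ I := by
      rcases cover (f 3) with h3K | h3I
      · rcases cover (f 1) with h1K | h1I
        · exact absurd (hK h1K h3K (f.injective.ne (by decide))) h13
        · rcases cover (f 0) with h0K | h0I'
          · exact absurd (hK h0K h3K (f.injective.ne (by decide))) h03
          · exact absurd h01 (hI _ h0I' _ h1I)
      · exact h3I
    have h1K : f 1 ∈ K := by
      rcases cover (f 1) with h | h
      · exact h
      · exact absurd h01 (hI _ h0I _ h)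
    have h2K : f 2 ∈ K := by
      rcases cover (f 2) with h | h
      · exact h
      · exact absurd h23 (hI _ h _ h3I)
    refine ⟨f 1, h1K, f 2, h2K, f.injective.ne (by decide),
      ⟨f 0, ⟨⟨h0I, h01.symm⟩, fun h => h02 h.2.symm⟩⟩,
      ⟨f 3, ⟨⟨h3I, h23⟩, fun h => h13 h.2⟩⟩⟩
  · rintro ⟨u, hu, v, hv, huv, ⟨a, ⟨haI, hua⟩, haNv⟩, ⟨b, ⟨hbI, hvb⟩, hbNu⟩⟩
    have hva : ¬ G.Adj v a := fun h => haNv ⟨haI, h⟩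
    have hub : ¬ G.Adj u b := fun h => hbNu ⟨hbI, h⟩
    have hab : ¬ G.Adj a b := hI a haI b hbI
    have huvadj : G.Adj u v := hK hu hv huv
    have nKI : ∀ x ∈ K, ∀ y ∈ I, x ≠ y := fun x hx y hy h =>
      Set.disjoint_left.mp hdisj hx (h ▸ hy)
    have hau : a ≠ u := fun h => (nKI u hu a haI) h.symm
    have hav : a ≠ v := fun h => (nKI v hv a haI) h.symm
    have hbu : b ≠ u := fun h => (nKI u hu b hbI) h.symm
    have hbv : b ≠ v := fun h => (nKI v hv b hbI) h.symm
    have hab' : a ≠ b := fun h => hva (h ▸ hvb)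
    refine ⟨⟨⟨![a, u, v, b], ?_⟩, ?_⟩⟩
    · intro i j hij
      fin_cases i <;> fin_cases j <;>
        simp_all [hau, hav, hbu, hbv, hab', huv, hau.symm, hav.symm, hbu.symm,
          hbv.symm, hab'.symm, huv.symm]
    · intro i j
      change G.Adj (![a, u, v, b] i) (![a, u, v, b] j) ↔ _
      fin_cases i <;> fin_cases j <;>
        simp_all [pathGraph_adj, G.adj_comm a u, G.adj_comm a v, G.adj_comm a b,
          G.adj_comm u v, G.adj_comm u b, G.adj_comm v b, G.ne_of_adj] <;> decide
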